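/- arXiv:2103.00664 — 4 statements merged into one kernel-verified Lean document; each statement's English description precedes it below -/
import Mathlib

section
/- Let k ≥ 3 be an integer, a ∈ (ℤ/2^kℤ)ˣ with a ≡ 1 (mod 4), and b ∈ ℤ/2^kℤ with v(b) < v(a−1). Then for every x ∈ ℤ/2^kℤ, the least positive integer n with (λ(a,b))^n(x) = x equals addord(b) = 2^{k−v(b)}; that is, λ(a,b) is a product of 2^k/addord(b) disjoint cycles, each of length addord(b). -/
/-- The affine permutation `λ(a,b) : x ↦ a·x + b` of `ZMod m`, for a unit `a` and an
element `b`. -/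
def affinePerm (m : ℕ) (a : (ZMod m)ˣ) (b : ZMod m) : Equiv.Perm (ZMod m) where
  toFun x := (a : ZMod m) * x + b
  invFun x := ((a⁻¹ : (ZMod m)ˣ) : ZMod m) * (x - b)
  left_inv x := by
    show (a⁻¹ : (ZMod m)ˣ) * ((a : ZMod m) * x + b - b) = x
    rw [add_sub_cancel_right, ← mul_assoc, Units.inv_mul, one_mul]
  right_inv x := by
    show (a : ZMod m) * ((a⁻¹ : (ZMod m)ˣ) * (x - b)) + b = x
    rw [← mul_assoc, Units.mul_inv, one_mul, sub_add_cancel]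

/-- `padicV p k c` is `v(c) = max{ j ∈ {0,…,k} : c ∈ p^j·(ℤ/p^kℤ) }`: it is `k` for
`c = 0`, and the `p`-adic valuation of the canonical representative `c.val` otherwise. -/
def padicV (p k : ℕ) (c : ZMod (p ^ k)) : ℕ :=
  if c = 0 then k else (c.val).factorization p

open Finset

private lemma two_fact_of_mod4 {x : ℕ} (hx : x % 4 = 2) : x.factorization 2 = 1 := by
  obtain ⟨q, rfl⟩ : ∃ q, x = 2 * (2 * q + 1) := ⟨x / 4, by omega⟩
  rw [Nat.factorization_mul (by norm_num) (by omega)]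
  simp [Nat.Prime.factorization_self Nat.prime_two,
    Nat.factorization_eq_zero_of_not_dvd (by omega : ¬ 2 ∣ 2*q+1)]

private lemma geomsum_pos (A : ℕ) (hA : 1 ≤ A) {n : ℕ} (hn : 0 < n) :
    0 < ∑ i ∈ range n, A ^ i :=
  sum_pos (fun i _ => pow_pos (by omega) i) (Finset.nonempty_range_iff.mpr hn.ne')

private lemma geomsum_fact (A : ℕ) (hA : A % 4 = 1) :
    ∀ n, 0 < n → (∑ i ∈ range n, A ^ i).factorization 2 = n.factorization 2 := by
  intro n
  induction n using Nat.strong_induction_on with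
  | _ n ih =>
    intro hn
    have hA1 : 1 ≤ A := by omega
    rcases Nat.even_or_odd n with he | ho
    · obtain ⟨m, hm⟩ := he
      have hm' : n = m + m := by omega
      have hmpos : 0 < m := by omega
      subst hm'
      have hsplit : (∑ i ∈ range (m + m), A ^ i)
          = (∑ i ∈ range m, A ^ i) * (A ^ m + 1) := by
        rw [Finset.sum_range_add]
        have : ∀ x, A ^ (m + x) = A ^ m * A ^ x := fun x => pow_add A m x
        simp only [this, ← Finset.mul_sum]
        ring
      have hmod : (A ^ m + 1) % 4 = 2 := by
        have := Nat.pow_mod A m 4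
        rw [hA] at this
        simp at this
        omega
      rw [hsplit, Nat.factorization_mul (geomsum_pos A hA1 hmpos).ne' (by positivity)]
      simp only [Finsupp.add_apply]
      rw [ih m (by omega) hmpos, two_fact_of_mod4 hmod,
        show m + m = 2 * m by ring,
        Nat.factorization_mul (by norm_num) (by omega)]
      simp [Nat.Prime.factorization_self Nat.prime_two]
      omega
    · have hno := Nat.odd_iff.mp ho
      have hodd : (∑ i ∈ range n, A ^ i) % 2 = 1 := by
        have h1 : ∀ i ∈ range n, A ^ i % 2 = 1 := by
          intro i _
          rw [Nat.pow_mod]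
          have : A % 2 = 1 := by omega
          simp [this]
        calc (∑ i ∈ range n, A ^ i) % 2 = (∑ i ∈ range n, A ^ i % 2) % 2 :=
              (Finset.sum_nat_mod _ _ _)
          _ = (∑ i ∈ range n, 1) % 2 := by rw [Finset.sum_congr rfl h1]
          _ = 1 := by simpa using hno
      rw [Nat.factorization_eq_zero_of_not_dvd (by omega),
        Nat.factorization_eq_zero_of_not_dvd (by omega)]

private lemma zmod_nsmul_eq_zero (k : ℕ) [NeZero ((2:ℕ)^k)] (c : ZMod (2^k)) (n : ℕ) :
    n • c = 0 ↔ 2^k ∣ n * c.val := by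
  have hc : ((c.val : ℕ) : ZMod (2^k)) = c := by rw [ZMod.natCast_val, ZMod.cast_id]
  have h2 : n • c = ((n * c.val : ℕ) : ZMod (2^k)) := by
    rw [nsmul_eq_mul, Nat.cast_mul, hc]
  rw [h2, ZMod.natCast_eq_zero_iff]


/-- For `k ≥ 3`, `a ≡ 1 (mod 4)` a unit of `ℤ/2^kℤ` and `b` with `v(b) < v(a−1)`, every
point of `ℤ/2^kℤ` lies on a cycle of `λ(a,b)` of length exactly
`addord(b) = 2^{k−v(b)}`. -/
theorem stmt12 (k : ℕ) (hk : 3 ≤ k) (a : (ZMod (2 ^ k))ˣ)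
    (ha : ZMod.castHom
        (show (4 : ℕ) ∣ 2 ^ k by
          have h4 : (2 : ℕ) ^ 2 ∣ 2 ^ k := pow_dvd_pow 2 (by omega)
          norm_num at h4; exact h4)
        (ZMod 4) (a : ZMod (2 ^ k)) = 1)
    (b : ZMod (2 ^ k))
    (hb : padicV 2 k b < padicV 2 k ((a : ZMod (2 ^ k)) - 1)) :
    (∀ x : ZMod (2 ^ k),
      Function.minimalPeriod (fun y => (affinePerm (2 ^ k) a b) y) x = addOrderOf b) ∧
    addOrderOf b = 2 ^ (k - padicV 2 k b) := by
  haveI : Fact (Nat.Prime 2) := ⟨Nat.prime_two⟩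
  haveI : NeZero ((2:ℕ)^k) := ⟨pow_ne_zero k two_ne_zero⟩
  set av : ZMod (2^k) := (a : ZMod (2^k)) with hav
  have hA4 : av.val % 4 = 1 := by
    have h := congrArg ZMod.val ha
    rw [ZMod.castHom_apply, ← ZMod.natCast_val, ZMod.val_natCast] at h
    rw [h]; rfl
  have hVle : ∀ c : ZMod (2^k), padicV 2 k c ≤ k := by
    intro c
    unfold padicV
    split
    · exact le_rfl
    · next hcne =>
      have hcv : c.val ≠ 0 := fun h => hcne ((ZMod.val_eq_zero _).mp h)
      have h1 := Nat.le_of_dvd (Nat.pos_of_ne_zero hcv) (Nat.ordProj_dvd c.val 2)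
      have h2 : c.val < 2^k := ZMod.val_lt c
      exact le_of_lt ((Nat.pow_lt_pow_iff_right (by norm_num)).mp (lt_of_le_of_lt h1 h2))
  have hbne : b ≠ 0 := by
    intro h
    have h2 := hVle (av - 1)
    have h0 : padicV 2 k (0 : ZMod (2^k)) = k := by simp [padicV]
    rw [h, h0] at hb
    omega
  set β := padicV 2 k b with hβ
  have hβdef : β = b.val.factorization 2 := by simp [padicV, hβ, hbne]
  have hbv : b.val ≠ 0 := fun h => hbne ((ZMod.val_eq_zero _).mp h)
  have hd1 : 2 ^ β ∣ b.val := hβdef ▸ Nat.ordProj_dvd _ _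
  have hd2 : ¬ 2 ^ (β+1) ∣ b.val :=
    hβdef ▸ Nat.pow_succ_factorization_not_dvd hbv Nat.prime_two
  have hβk : β < k := by
    have h1 := Nat.le_of_dvd (Nat.pos_of_ne_zero hbv) hd1
    have h2 : b.val < 2^k := ZMod.val_lt b
    exact (Nat.pow_lt_pow_iff_right (by norm_num)).mp (lt_of_le_of_lt h1 h2)
  obtain ⟨r, hr⟩ : ∃ r, k - β = r + 1 := ⟨k - β - 1, by omega⟩
  obtain ⟨w, hw⟩ := hd1
  have hwodd : ¬ 2 ∣ w := by
    intro h2w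
    obtain ⟨w2, rfl⟩ := h2w
    exact hd2 ⟨w2, by rw [hw]; ring⟩
  -- order of b
  have hordb : addOrderOf b = 2 ^ (k - β) := by
    rw [hr]
    apply addOrderOf_eq_prime_pow
    · rw [zmod_nsmul_eq_zero]
      intro hdvd
      rw [hw, show 2^r * (2^β * w) = 2^(k-1) * w by
        rw [← mul_assoc, ← pow_add]; congr 2; omega] at hdvd
      rw [show (2:ℕ)^k = 2^(k-1) * 2 by rw [← pow_succ]; congr 1; omega] at hdvd
      exact hwodd ((Nat.mul_dvd_mul_iff_left (pow_pos two_pos (k-1))).mp hdvd)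
    · rw [← hr, zmod_nsmul_eq_zero, hw, ← mul_assoc, ← pow_add,
        show k - β + β = k by omega]
      exact ⟨w, rfl⟩
  -- smul of (av - 1)
  have ha1 : 2^r • (av - 1) = 0 := by
    rw [zmod_nsmul_eq_zero]
    by_cases hz : av - 1 = 0
    · simp [hz]
    · have hs : padicV 2 k (av - 1) = (av-1).val.factorization 2 := by simp [padicV, hz]
      have hks : β + 1 ≤ (av-1).val.factorization 2 := by rw [← hs]; omega
      obtain ⟨u, hu⟩ : (2:ℕ)^(β+1) ∣ (av - 1).val :=
        dvd_trans (pow_dvd_pow 2 hks) (Nat.ordProj_dvd _ _)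
      rw [hu, ← mul_assoc, ← pow_add, show r + (β+1) = k by omega]
      exact ⟨u, rfl⟩
  refine ⟨fun x => ?_, hordb⟩
  set f : ZMod (2^k) → ZMod (2^k) := fun y => (affinePerm (2^k) a b) y with hf
  set c : ZMod (2^k) := (av - 1) * x + b with hc
  have ha1x : 2^r • ((av - 1) * x) = 0 := by
    rw [← smul_mul_assoc, ha1, zero_mul]
  have hc0 : ¬ 2^r • c = 0 := by
    intro h
    rw [hc, smul_add, ha1x, zero_add, ← addOrderOf_dvd_iff_nsmul_eq_zero, hordb] at h
    have := (Nat.pow_dvd_pow_iff_le_right one_lt_two).mp h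
    omega
  have hc1 : 2^(r+1) • c = 0 := by
    rw [hc, smul_add]
    have h1 : 2^(r+1) • ((av-1)*x) = 0 := by
      rw [pow_succ', mul_smul, ha1x, smul_zero]
    have h2 : 2^(r+1) • b = 0 := by
      rw [← hr, ← hordb]; exact addOrderOf_nsmul_eq_zero b
    rw [h1, h2, add_zero]
  have hordc : addOrderOf c = 2 ^ (k - β) := by
    rw [hr]; exact addOrderOf_eq_prime_pow hc0 hc1
  have havcast : ((av.val : ℕ) : ZMod (2^k)) = av := by
    rw [ZMod.natCast_val, ZMod.cast_id]
  have hiter : ∀ n (y : ZMod (2^k)),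
      f^[n] y = av^n * y + (∑ i ∈ Finset.range n, av^i) * b := by
    intro n
    induction n with
    | zero => intro y; simp
    | succ n ih =>
      intro y
      rw [Function.iterate_succ_apply', ih y]
      show av * (av^n * y + (∑ i ∈ Finset.range n, av^i) * b) + b = _
      rw [geom_sum_succ]
      ring
  have hfix : ∀ n : ℕ, 0 < n → (f^[n] x = x ↔ 2^(k-β) ∣ n) := by
    intro n hn
    have hkey : f^[n] x - x = (∑ i ∈ Finset.range n, av^i) * c := by
      rw [hiter n x, hc]
      have gm := geom_sum_mul av n
      linear_combination (-x) * gm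
    have hcast : (((∑ i ∈ Finset.range n, av.val ^ i : ℕ)) : ZMod (2^k))
        = ∑ i ∈ Finset.range n, av^i := by
      push_cast
      simp [havcast]
    have hTn : (∑ i ∈ Finset.range n, av.val ^ i) ≠ 0 :=
      (geomsum_pos av.val (by omega) hn).ne'
    constructor
    · intro h
      have h2 : (∑ i ∈ Finset.range n, av^i) * c = 0 := by
        rw [← hkey, h, sub_self]
      rw [← hcast, ← nsmul_eq_mul, ← addOrderOf_dvd_iff_nsmul_eq_zero, hordc] at h2
      rw [(Nat.Prime.pow_dvd_iff_le_factorization Nat.prime_two hn.ne')]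
      rw [(Nat.Prime.pow_dvd_iff_le_factorization Nat.prime_two hTn)] at h2
      rwa [geomsum_fact av.val hA4 n hn] at h2
    · intro h
      have h2 : (∑ i ∈ Finset.range n, av^i) * c = 0 := by
        rw [← hcast, ← nsmul_eq_mul, ← addOrderOf_dvd_iff_nsmul_eq_zero, hordc,
          (Nat.Prime.pow_dvd_iff_le_factorization Nat.prime_two hTn),
          geomsum_fact av.val hA4 n hn,
          ← (Nat.Prime.pow_dvd_iff_le_factorization Nat.prime_two hn.ne')]
        exact h
      have := hkey.trans h2
      rwa [sub_eq_zero] at this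
  have hNpos : 0 < 2^(k-β) := pow_pos two_pos _
  have hper : Function.IsPeriodicPt f (2^(k-β)) x := (hfix _ hNpos).mpr dvd_rfl
  have hdvd1 := hper.minimalPeriod_dvd
  have hpos := hper.minimalPeriod_pos hNpos
  have hdvd2 : 2^(k-β) ∣ Function.minimalPeriod f x :=
    (hfix _ hpos).mp (Function.isPeriodicPt_minimalPeriod f x)
  rw [hordb]
  exact Nat.dvd_antisymm hdvd1 hdvd2
end

section
/- Let p be a prime, k a positive integer, a ∈ (ℤ/p^kℤ)ˣ, and u, v ∈ ℤ/p^kℤ. The permutations λ(a,u) and λ(a,v) of ℤ/p^kℤ are conjugate in Hol(ℤ/p^kℤ) — i.e., there exist c ∈ (ℤ/p^kℤ)ˣ and z ∈ ℤ/p^kℤ with λ(c,z) ∘ λ(a,u) ∘ λ(c,z)⁻¹ = λ(a,v) — if and only if either both u and v lie in the subgroup (1−a)·(ℤ/p^kℤ), or u does not lie in (1−a)·(ℤ/p^kℤ) and u and v have the same additive order in ℤ/p^kℤ. -/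
lemma ord_unit_mul {n : ℕ} (ε : (ZMod n)ˣ) (x : ZMod n) :
    addOrderOf ((ε : ZMod n) * x) = addOrderOf x := by
  have : (ε : ZMod n) * x = (DistribMulAction.toAddEquiv (ZMod n) ε) x := rfl
  rw [this, AddEquiv.addOrderOf_eq]

lemma rep (p k : ℕ) (hp : p.Prime) (x : ZMod (p ^ k)) :
    ∃ m ≤ k, ∃ ε : (ZMod (p ^ k))ˣ, x = (p : ZMod (p ^ k)) ^ m * ε := by
  have hnk : p ^ k ≠ 0 := pow_ne_zero k hp.pos.ne'
  haveI : NeZero (p ^ k) := ⟨hnk⟩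
  by_cases hx : x = 0
  · refine ⟨k, le_rfl, 1, ?_⟩
    rw [hx, Units.val_one, mul_one, ← Nat.cast_pow, ZMod.natCast_self]
  · set N := x.val with hNdef
    have hN0 : N ≠ 0 := fun h => hx ((ZMod.val_eq_zero x).mp h)
    set m := N.factorization p with hm
    have hdvd : p ^ m ∣ N := Nat.ordProj_dvd N p
    have hcop : Nat.Coprime p (N / p ^ m) := Nat.coprime_ordCompl hp hN0
    have hNt : p ^ m * (N / p ^ m) = N := Nat.ordProj_mul_ordCompl_eq_self N p
    have hmk : m ≤ k := by
      have h1 : p ^ m ≤ N := Nat.le_of_dvd (Nat.pos_of_ne_zero hN0) hdvd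
      have h2 : N < p ^ k := ZMod.val_lt x
      exact le_of_lt ((Nat.pow_lt_pow_iff_right hp.one_lt).mp (lt_of_le_of_lt h1 h2))
    have hcop2 : Nat.Coprime (N / p ^ m) (p ^ k) := (hcop.symm).pow_right k
    refine ⟨m, hmk, ZMod.unitOfCoprime _ hcop2, ?_⟩
    have : ((N : ℕ) : ZMod (p ^ k)) = x := by
      rw [hNdef, ZMod.natCast_val, ZMod.cast_id]
    rw [ZMod.coe_unitOfCoprime]
    conv_lhs => rw [← this, ← hNt]
    push_cast
    ring

lemma ordPow (p k : ℕ) (hp : p.Prime) {m : ℕ} (hmk : m ≤ k) :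
    addOrderOf ((p : ZMod (p ^ k)) ^ m) = p ^ (k - m) := by
  have hnk : p ^ k ≠ 0 := pow_ne_zero k hp.pos.ne'
  have : ((p : ZMod (p ^ k)) ^ m) = ((p ^ m : ℕ) : ZMod (p ^ k)) := by push_cast; ring
  rw [this, ZMod.addOrderOf_coe _ hnk, Nat.gcd_eq_right (pow_dvd_pow p hmk),
    Nat.pow_div hmk hp.pos]


/-- `λ(a,u)` and `λ(a,v)` are conjugate in `Hol(ℤ/p^kℤ)` if and only if either both `u`
and `v` lie in the subgroup `(1−a)·(ℤ/p^kℤ)`, or `u` does not lie in that subgroup and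
`u` and `v` have the same additive order. -/
theorem stmt15 (p : ℕ) (hp : p.Prime) (k : ℕ) (hk : 0 < k)
    (a : (ZMod (p ^ k))ˣ) (u v : ZMod (p ^ k)) :
    (∃ (c : (ZMod (p ^ k))ˣ) (z : ZMod (p ^ k)),
        affinePerm (p ^ k) c z * affinePerm (p ^ k) a u * (affinePerm (p ^ k) c z)⁻¹
          = affinePerm (p ^ k) a v)
      ↔ ((∃ y, u = (1 - (a : ZMod (p ^ k))) * y) ∧
            (∃ y, v = (1 - (a : ZMod (p ^ k))) * y))
        ∨ ((¬ ∃ y, u = (1 - (a : ZMod (p ^ k))) * y) ∧ addOrderOf u = addOrderOf v) := by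
  set s : ZMod (p ^ k) := 1 - (a : ZMod (p ^ k)) with hs
  -- Step 1: reduce conjugacy to an algebraic condition
  have conj_eq : ∀ (c : (ZMod (p ^ k))ˣ) (z : ZMod (p ^ k)),
      affinePerm (p ^ k) c z * affinePerm (p ^ k) a u * (affinePerm (p ^ k) c z)⁻¹
        = affinePerm (p ^ k) a ((c : ZMod (p ^ k)) * u + s * z) := by
    intro c z
    ext x
    show (c : ZMod (p ^ k)) * ((a : ZMod (p ^ k)) *
        (((c⁻¹ : (ZMod (p ^ k))ˣ) : ZMod (p ^ k)) * (x - z)) + u) + z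
        = (a : ZMod (p ^ k)) * x + ((c : ZMod (p ^ k)) * u + s * z)
    have hc : (c : ZMod (p ^ k)) * ((c⁻¹ : (ZMod (p ^ k))ˣ) : ZMod (p ^ k)) = 1 := c.mul_inv
    rw [hs]
    linear_combination ((a : ZMod (p ^ k)) * (x - z)) * hc
  have inj : ∀ w w' : ZMod (p ^ k),
      affinePerm (p ^ k) a w = affinePerm (p ^ k) a w' → w = w' := by
    intro w w' h
    have := congrArg (fun f : Equiv.Perm (ZMod (p ^ k)) => f 0) h
    simpa [affinePerm] using this
  have step1 : (∃ (c : (ZMod (p ^ k))ˣ) (z : ZMod (p ^ k)),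
      affinePerm (p ^ k) c z * affinePerm (p ^ k) a u * (affinePerm (p ^ k) c z)⁻¹
        = affinePerm (p ^ k) a v)
      ↔ ∃ (c : (ZMod (p ^ k))ˣ) (z : ZMod (p ^ k)), v = (c : ZMod (p ^ k)) * u + s * z := by
    constructor
    · rintro ⟨c, z, h⟩
      exact ⟨c, z, (inj _ _ ((conj_eq c z).symm.trans h)).symm⟩
    · rintro ⟨c, z, h⟩
      exact ⟨c, z, by rw [conj_eq c z, h]⟩
  rw [step1]
  have dvd_iff : ∀ w : ZMod (p ^ k), (∃ y, w = s * y) ↔ s ∣ w := by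
    intro w; exact ⟨fun ⟨y, hy⟩ => ⟨y, hy⟩, fun ⟨y, hy⟩ => ⟨y, hy⟩⟩
  rw [dvd_iff, dvd_iff]
  constructor
  · rintro ⟨c, z, hv⟩
    by_cases hdu : s ∣ u
    · left
      exact ⟨hdu, hv ▸ dvd_add (hdu.mul_left _) (Dvd.intro z rfl)⟩
    · right
      refine ⟨hdu, ?_⟩
      obtain ⟨m, hmk, ε, hu⟩ := rep p k hp u
      obtain ⟨j, hjk, δ, hsr⟩ := rep p k hp s
      have hmj : m < j := by
        by_contra h
        push_neg at h
        refine hdu ⟨(p : ZMod (p ^ k)) ^ (m - j) * ε * ((δ⁻¹ : (ZMod (p ^ k))ˣ) : ZMod (p ^ k)), ?_⟩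
        rw [hu, hsr]
        have hpj : (p : ZMod (p ^ k)) ^ j * (p : ZMod (p ^ k)) ^ (m - j)
            = (p : ZMod (p ^ k)) ^ m := by
          rw [← pow_add]; congr 1; omega
        have hδ : ((δ : ZMod (p ^ k))) * ((δ⁻¹ : (ZMod (p ^ k))ˣ) : ZMod (p ^ k)) = 1 :=
          δ.mul_inv
        calc (p : ZMod (p ^ k)) ^ m * ε
            = ((p : ZMod (p ^ k)) ^ j * (p : ZMod (p ^ k)) ^ (m - j)) * ε * 1 := by
              rw [hpj, mul_one]
          _ = (p : ZMod (p ^ k)) ^ j * (δ : ZMod (p ^ k))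
              * ((p : ZMod (p ^ k)) ^ (m - j) * ε * ((δ⁻¹ : (ZMod (p ^ k))ˣ) : ZMod (p ^ k))) := by
              rw [← hδ]; ring
      have hvw : v = (p : ZMod (p ^ k)) ^ m * ((c : ZMod (p ^ k)) * ε
          + (p : ZMod (p ^ k)) ^ (j - m) * ((δ : ZMod (p ^ k)) * z)) := by
        rw [hv, hu, hsr]
        have hj : (p : ZMod (p ^ k)) ^ j
            = (p : ZMod (p ^ k)) ^ m * (p : ZMod (p ^ k)) ^ (j - m) := by
          rw [← pow_add]; congr 1; omega
        rw [hj]; ring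
      have hnil : IsNilpotent ((p : ZMod (p ^ k)) ^ (j - m) * ((δ : ZMod (p ^ k)) * z)) := by
        refine ⟨k, ?_⟩
        have hpk0 : (p : ZMod (p ^ k)) ^ k = 0 := by
          rw [← Nat.cast_pow, ZMod.natCast_self]
        have h1 : ((p : ZMod (p ^ k)) ^ (j - m)) ^ k = 0 := by
          rw [← pow_mul]
          calc (p : ZMod (p ^ k)) ^ ((j - m) * k)
              = (p : ZMod (p ^ k)) ^ k * (p : ZMod (p ^ k)) ^ ((j - m) * k - k) := by
                rw [← pow_add]; congr 1
                have hle : k ≤ (j - m) * k := Nat.le_mul_of_pos_left k (by omega)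
                exact (Nat.add_sub_cancel' hle).symm
            _ = 0 := by rw [hpk0, zero_mul]
        rw [mul_pow, h1, zero_mul]
      have hcu : IsUnit ((c : ZMod (p ^ k)) * (ε : ZMod (p ^ k))) := by
        have := (c * ε).isUnit
        rwa [Units.val_mul] at this
      obtain ⟨ω, hω⟩ := hnil.isUnit_add_left_of_commute hcu (Commute.all _ _)
      rw [hvw, ← hω, mul_comm ((p : ZMod (p ^ k)) ^ m) ((ω : ZMod (p ^ k))), ord_unit_mul,
        hu, mul_comm ((p : ZMod (p ^ k)) ^ m) ((ε : ZMod (p ^ k))), ord_unit_mul]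
  · rintro (⟨⟨y, hy⟩, ⟨y', hy'⟩⟩ | ⟨hnd, hord⟩)
    · refine ⟨1, y' - y, ?_⟩
      rw [Units.val_one, one_mul, hy, hy']
      ring
    · obtain ⟨m, hmk, ε, hu⟩ := rep p k hp u
      obtain ⟨n, hnk', ε', hv⟩ := rep p k hp v
      have hou : addOrderOf u = p ^ (k - m) := by
        rw [hu, mul_comm, ord_unit_mul, ordPow p k hp hmk]
      have hov : addOrderOf v = p ^ (k - n) := by
        rw [hv, mul_comm, ord_unit_mul, ordPow p k hp hnk']
      have hmn : m = n := by
        rw [hou, hov] at hord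
        have := Nat.pow_right_injective hp.two_le hord
        omega
      refine ⟨ε' * ε⁻¹, 0, ?_⟩
      rw [mul_zero, add_zero, Units.val_mul, hu, hv, hmn]
      have hε : ((ε⁻¹ : (ZMod (p ^ k))ˣ) : ZMod (p ^ k)) * (ε : ZMod (p ^ k)) = 1 := ε.inv_mul
      linear_combination -(p : ZMod (p ^ k)) ^ n * (ε' : ZMod (p ^ k)) * hε
end

section
/- Let p be an odd prime and k a positive integer. If σ = λ(a,b) is an element of Hol(ℤ/p^kℤ) with σ ∘ σ = id, then either σ = id or σ is conjugate in Hol(ℤ/p^kℤ) to the negation map λ(−1,0) : x ↦ −x; moreover σ cannot be conjugate to both (id and x ↦ −x are distinct and id is not conjugate to any other element). Hence Hol(ℤ/p^kℤ) has exactly two conjugacy classes of elements of square the identity, represented by λ(1,0) and λ(−1,0). -/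
lemma affinePerm_apply (m : ℕ) (a : (ZMod m)ˣ) (b : ZMod m) (x : ZMod m) :
    affinePerm m a b x = (a : ZMod m) * x + b := rfl

lemma affinePerm_inv_apply (m : ℕ) (a : (ZMod m)ˣ) (b : ZMod m) (x : ZMod m) :
    (affinePerm m a b)⁻¹ x = ((a⁻¹ : (ZMod m)ˣ) : ZMod m) * (x - b) := rfl

/-- For an odd prime `p`: any `σ = λ(a,b)` in `Hol(ℤ/p^kℤ)` with `σ ∘ σ = id` is either
the identity, or conjugate in `Hol(ℤ/p^kℤ)` to the negation map `λ(−1,0)` — and exactly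
one of these two alternatives holds. -/
theorem stmt16 (p : ℕ) (hp : p.Prime) (hodd : Odd p) (k : ℕ) (hk : 0 < k)
    (a : (ZMod (p ^ k))ˣ) (b : ZMod (p ^ k))
    (h2 : affinePerm (p ^ k) a b * affinePerm (p ^ k) a b = 1) :
    Xor' (affinePerm (p ^ k) a b = 1)
      (∃ (c : (ZMod (p ^ k))ˣ) (z : ZMod (p ^ k)),
        affinePerm (p ^ k) c z * affinePerm (p ^ k) a b * (affinePerm (p ^ k) c z)⁻¹
          = affinePerm (p ^ k) (-1) 0) := by
  haveI : NeZero (p ^ k) := ⟨pow_ne_zero k hp.ne_zero⟩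
  haveI : Fact (Nat.Prime p) := ⟨hp⟩
  have hp2 : p ≠ 2 := by
    rintro rfl
    exact (Nat.not_odd_iff_even.mpr (by decide)) hodd
  -- 2 is a unit in ZMod (p^k)
  have h2u : IsUnit (2 : ZMod (p ^ k)) := by
    rw [show (2 : ZMod (p ^ k)) = ((2 : ℕ) : ZMod (p ^ k)) by norm_cast]
    rw [ZMod.isUnit_iff_coprime]
    exact Nat.Coprime.pow_right k (Nat.coprime_two_left.mpr hodd)
  have h20 : (2 : ZMod (p ^ k)) ≠ 0 := by
    intro h
    haveI : Nontrivial (ZMod (p ^ k)) := by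
      haveI : Fact (1 < p ^ k) := ⟨Nat.one_lt_pow hk.ne' hp.one_lt⟩
      infer_instance
    exact h2u.ne_zero h
  have hneg1 : (-1 : ZMod (p ^ k)) ≠ 1 := by
    intro h
    apply h20
    linear_combination -h
  -- extract the algebraic equations from h2
  have e0 : (a : ZMod (p ^ k)) * b + b = 0 := by
    have := congrArg (fun f : Equiv.Perm (ZMod (p ^ k)) => f 0) h2
    simpa [affinePerm_apply] using this
  have e1 : (a : ZMod (p ^ k)) * (a : ZMod (p ^ k)) = 1 := by
    have := congrArg (fun f : Equiv.Perm (ZMod (p ^ k)) => f 1) h2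
    simp only [Equiv.Perm.mul_apply, affinePerm_apply, Equiv.Perm.one_apply, mul_one] at this
    -- this : a * (a + b) + b = 1
    have : (a : ZMod (p ^ k)) * (a : ZMod (p ^ k)) + ((a : ZMod (p ^ k)) * b + b) = 1 := by
      linear_combination this
    rw [e0, add_zero] at this
    exact this
  -- a unit criterion via reduction mod p
  have pdvd : p ∣ p ^ k := dvd_pow_self p hk.ne'
  set π := ZMod.castHom pdvd (ZMod p) with hπ
  have key : ∀ x : ZMod (p ^ k), π x ≠ 0 → IsUnit x := by
    intro x hx
    have hxval : ((x.val : ℕ) : ZMod (p ^ k)) = x := by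
      rw [ZMod.natCast_val, ZMod.cast_id]
    rw [← hxval, ZMod.isUnit_iff_coprime]
    apply Nat.Coprime.pow_right
    rw [Nat.coprime_comm]
    apply (Nat.Prime.coprime_iff_not_dvd hp).mpr
    intro hdvd
    apply hx
    have : ((x.val : ℕ) : ZMod p) = 0 := (ZMod.natCast_eq_zero_iff _ _).mpr hdvd
    rw [ZMod.natCast_val] at this
    simpa [hπ, ZMod.castHom_apply] using this
  -- a = 1 or a = -1
  have hprod : ((a : ZMod (p ^ k)) - 1) * ((a : ZMod (p ^ k)) + 1) = 0 := by
    linear_combination e1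
  have hcase : (a : ZMod (p ^ k)) = 1 ∨ (a : ZMod (p ^ k)) = -1 := by
    have hπa : π (a : ZMod (p ^ k)) * π (a : ZMod (p ^ k)) = 1 := by
      rw [← map_mul, e1, map_one]
    have : (π (a : ZMod (p ^ k)) - 1) * (π (a : ZMod (p ^ k)) + 1) = 0 := by
      linear_combination hπa
    rcases mul_eq_zero.mp this with h | h
    · -- π a = 1, so a + 1 is a unit, so a - 1 = 0
      left
      have h1 : π ((a : ZMod (p ^ k)) + 1) ≠ 0 := by
        rw [map_add, map_one, sub_eq_zero.mp h]
        intro hc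
        have : ((2 : ℕ) : ZMod p) = 0 := by push_cast; linear_combination hc
        rw [ZMod.natCast_eq_zero_iff] at this
        rcases (Nat.prime_dvd_prime_iff_eq hp Nat.prime_two).mp this with h
        exact hp2 h
      have hu := key _ h1
      exact sub_eq_zero.mp ((hu.mul_left_eq_zero).mp hprod)
    · -- π a = -1, so a - 1 is a unit, so a + 1 = 0
      right
      have h1 : π ((a : ZMod (p ^ k)) - 1) ≠ 0 := by
        rw [map_sub, map_one, eq_neg_of_add_eq_zero_left h]
        intro hc
        have : ((2 : ℕ) : ZMod p) = 0 := by push_cast; linear_combination -hc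
        rw [ZMod.natCast_eq_zero_iff] at this
        rcases (Nat.prime_dvd_prime_iff_eq hp Nat.prime_two).mp this with h
        exact hp2 h
      have hu := key _ h1
      exact eq_neg_of_add_eq_zero_left ((hu.mul_right_eq_zero).mp hprod)
  rcases hcase with ha | ha
  · -- a = 1, hence b = 0, σ = 1
    have hb : b = 0 := by
      rw [ha, one_mul] at e0
      have h2b : (2 : ZMod (p ^ k)) * b = 0 := by linear_combination e0
      exact (h2u.mul_right_eq_zero).mp h2b
    have hid : affinePerm (p ^ k) a b = 1 := by
      ext x
      simp [affinePerm_apply, ha, hb]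
    left
    refine ⟨hid, ?_⟩
    rintro ⟨c, z, hcz⟩
    rw [hid, mul_one, mul_inv_cancel] at hcz
    have := congrArg (fun f : Equiv.Perm (ZMod (p ^ k)) => f 1) hcz
    simp [affinePerm_apply] at this
    exact hneg1 this.symm
  · -- a = -1: conjugate to negation, and not the identity
    right
    constructor
    · obtain ⟨u, hu⟩ := h2u
      refine ⟨1, (u⁻¹ : (ZMod (p ^ k))ˣ) * (-b), ?_⟩
      have h2inv : (2 : ZMod (p ^ k)) * ((u⁻¹ : (ZMod (p ^ k))ˣ) : ZMod (p ^ k)) = 1 := by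
        rw [← hu, Units.mul_inv]
      ext x
      simp only [Equiv.Perm.mul_apply, affinePerm_apply, affinePerm_inv_apply, inv_one,
        Units.val_one, one_mul, ha, Units.val_neg, neg_mul, neg_neg, neg_sub, add_zero]
      ring_nf
      linear_combination (-b) * h2inv
    · intro hid
      have h0 := congrArg (fun f : Equiv.Perm (ZMod (p ^ k)) => f 0) hid
      simp [affinePerm_apply] at h0
      have h1 := congrArg (fun f : Equiv.Perm (ZMod (p ^ k)) => f 1) hid
      simp [affinePerm_apply, ha, h0] at h1
      exact hneg1 h1
end

section
/- Let Ω be a finite nonempty set with n := |Ω|, d a positive integer, ψ a permutation of {0,…,d−1}, g_0,…,g_{d−1} permutations of Ω, and w := w(ψ,g). Then w is a (d·n)-cycle on Ω × {0,…,d−1} (i.e., some — equivalently, every — point has w-orbit of size d·n) if and only if ψ is a d-cycle on {0,…,d−1} (some point has ψ-orbit of size d) and the forward cycle product h := g_{ψ^d(0)} ∘ g_{ψ^{d−1}(0)} ∘ ⋯ ∘ g_{ψ(0)} is an n-cycle on Ω (some point has h-orbit of size n). (Note that when ψ is a d-cycle, ψ^d(0) = 0 and w^d(x,0) = (h(x),0)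 for all x ∈ Ω.) -/
/-- The imprimitive wreath element `w(ψ,g)`: the permutation of `Ω × {0,…,d−1}` given by
`(x,i) ↦ (g_{ψ(i)}(x), ψ(i))`. -/
def wreath {Ω : Type*} (d : ℕ) (ψ : Equiv.Perm (Fin d)) (g : Fin d → Equiv.Perm Ω) :
    Equiv.Perm (Ω × Fin d) where
  toFun p := (g (ψ p.2) p.1, ψ p.2)
  invFun p := ((g p.2)⁻¹ p.1, ψ⁻¹ p.2)
  left_inv p := by simp
  right_inv p := by simp

open Function Equiv

section helpers

variable {α : Type*}

lemma perm_isPeriodicPt_iff (σ : Equiv.Perm α) (n : ℕ) (x : α) :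
    Function.IsPeriodicPt (⇑σ) n x ↔ (σ ^ n) x = x := by
  simp only [Function.IsPeriodicPt, Function.IsFixedPt, Equiv.Perm.coe_pow]

lemma perm_mem_periodicPts [Finite α] (σ : Equiv.Perm α) (x : α) :
    x ∈ Function.periodicPts ⇑σ := by
  refine ⟨orderOf σ, orderOf_pos σ, ?_⟩
  rw [perm_isPeriodicPt_iff, pow_orderOf_eq_one]
  rfl

lemma perm_minimalPeriod_pos [Finite α] (σ : Equiv.Perm α) (x : α) :
    0 < Function.minimalPeriod (⇑σ) x :=
  Function.minimalPeriod_pos_of_mem_periodicPts (perm_mem_periodicPts σ x)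

lemma perm_pow_minimalPeriod (σ : Equiv.Perm α) (x : α) :
    (σ ^ Function.minimalPeriod (⇑σ) x) x = x :=
  (perm_isPeriodicPt_iff _ _ _).mp (Function.isPeriodicPt_minimalPeriod _ _)

lemma perm_minimalPeriod_le_card [Fintype α] (σ : Equiv.Perm α) (x : α) :
    Function.minimalPeriod (⇑σ) x ≤ Fintype.card α := by
  classical
  have hinj : ((Finset.range (Function.minimalPeriod (⇑σ) x) : Finset ℕ) : Set ℕ).InjOn
      (fun k => (⇑σ)^[k] x) := by
    rw [Finset.coe_range]
    exact Function.iterate_injOn_Iio_minimalPeriod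
  have := Finset.card_le_card_of_injOn (fun k => (⇑σ)^[k] x)
    (fun a _ => Finset.mem_univ _) hinj
  simpa using this

lemma perm_exists_pow_apply [Fintype α] (σ : Equiv.Perm α) {i : α}
    (hi : Function.minimalPeriod (⇑σ) i = Fintype.card α) (j : α) :
    ∃ t : ℕ, (σ ^ t) i = j := by
  classical
  have hinj : ((Finset.range (Fintype.card α) : Finset ℕ) : Set ℕ).InjOn
      (fun k => (⇑σ)^[k] i) := by
    rw [Finset.coe_range, ← hi]
    exact Function.iterate_injOn_Iio_minimalPeriod
  have himg : (Finset.range (Fintype.card α)).image (fun k => (⇑σ)^[k] i) = Finset.univ := by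
    apply Finset.eq_univ_of_card
    rw [Finset.card_image_of_injOn hinj, Finset.card_range]
  have hj : j ∈ (Finset.range (Fintype.card α)).image (fun k => (⇑σ)^[k] i) := by
    rw [himg]; exact Finset.mem_univ _
  obtain ⟨t, -, ht⟩ := Finset.mem_image.mp hj
  exact ⟨t, by rw [Equiv.Perm.coe_pow]; exact ht⟩

lemma conj_pow_perm (c Q : Equiv.Perm α) (n : ℕ) :
    (c * Q * c⁻¹) ^ n = c * Q ^ n * c⁻¹ := by
  induction n with
  | zero => simp
  | succ n ih => rw [pow_succ, ih, pow_succ]; group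

lemma perm_minimalPeriod_conj (c Q : Equiv.Perm α) (x : α) :
    Function.minimalPeriod (⇑(c * Q * c⁻¹)) (c x) = Function.minimalPeriod (⇑Q) x := by
  have key : ∀ n : ℕ, Function.IsPeriodicPt (⇑(c * Q * c⁻¹)) n (c x) ↔
      Function.IsPeriodicPt (⇑Q) n x := by
    intro n
    rw [perm_isPeriodicPt_iff, perm_isPeriodicPt_iff, conj_pow_perm]
    simp [Equiv.Perm.mul_apply]
  apply Nat.dvd_antisymm
  · exact Function.IsPeriodicPt.minimalPeriod_dvd
      ((key _).mpr (Function.isPeriodicPt_minimalPeriod _ _))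
  · exact Function.IsPeriodicPt.minimalPeriod_dvd
      ((key _).mp (Function.isPeriodicPt_minimalPeriod _ _))

end helpers

section wreathLemmas

variable {Ω : Type*} {d : ℕ} (ψ : Equiv.Perm (Fin d)) (g : Fin d → Equiv.Perm Ω)

/-- The partial forward product along the `ψ`-orbit. -/
def wprod (k : ℕ) (i : Fin d) : Equiv.Perm Ω :=
  ((List.range k).map (fun j => g ((ψ ^ (k - j)) i))).prod

lemma wprod_zero (i : Fin d) : wprod ψ g 0 i = 1 := rfl

lemma wprod_succ (k : ℕ) (i : Fin d) :
    wprod ψ g (k + 1) i = g ((ψ ^ (k + 1)) i) * wprod ψ g k i := by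
  unfold wprod
  rw [List.range_succ_eq_map, List.map_cons, List.map_map, List.prod_cons]
  simp [Function.comp_def, Nat.succ_sub_succ]

lemma wreath_pow_apply (k : ℕ) (x : Ω) (i : Fin d) :
    (wreath d ψ g ^ k) (x, i) = ((wprod ψ g k i) x, (ψ ^ k) i) := by
  induction k with
  | zero => simp [wprod_zero]
  | succ k ih =>
    rw [pow_succ', Equiv.Perm.mul_apply, ih, wprod_succ, pow_succ' ψ]
    rfl

lemma wprod_add (a b : ℕ) (i : Fin d) :
    wprod ψ g (a + b) i = wprod ψ g a ((ψ ^ b) i) * wprod ψ g b i := by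
  ext x
  have h1 := wreath_pow_apply ψ g (a + b) x i
  have h2 : (wreath d ψ g ^ (a + b)) (x, i)
      = (wreath d ψ g ^ a) ((wreath d ψ g ^ b) (x, i)) := by
    rw [pow_add]; rfl
  rw [h2, wreath_pow_apply, wreath_pow_apply] at h1
  exact (congrArg Prod.fst h1).symm

lemma wprod_mul (p m : ℕ) (i : Fin d) (hpi : (ψ ^ p) i = i) :
    wprod ψ g (p * m) i = (wprod ψ g p i) ^ m := by
  induction m with
  | zero => simp [wprod_zero]
  | succ m ih =>
    have : p * (m + 1) = p * m + p := by ring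
    rw [this, wprod_add, hpi, ih, pow_succ]

end wreathLemmas

lemma wreath_minimalPeriod [Fintype Ω] (x : Ω) (i : Fin d) :
    Function.minimalPeriod (⇑(wreath d ψ g)) (x, i)
      = Function.minimalPeriod (⇑ψ) i
        * Function.minimalPeriod (⇑(wprod ψ g (Function.minimalPeriod (⇑ψ) i) i)) x := by
  set p := Function.minimalPeriod (⇑ψ) i with hp
  set Q := wprod ψ g p i with hQdef
  set q := Function.minimalPeriod (⇑Q) x with hq
  have hpi : (ψ ^ p) i = i := perm_pow_minimalPeriod ψ i
  have hstep1 : Function.IsPeriodicPt (⇑(wreath d ψ g)) (p * q) (x, i) := by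
    rw [perm_isPeriodicPt_iff, wreath_pow_apply, wprod_mul ψ g p q i hpi, pow_mul]
    have h2 : ((ψ ^ p) ^ q) i = i := Function.IsFixedPt.iterate hpi q
    rw [perm_pow_minimalPeriod Q x, h2]
  apply Nat.dvd_antisymm
  · exact Function.IsPeriodicPt.minimalPeriod_dvd hstep1
  · have hMper := perm_pow_minimalPeriod (wreath d ψ g) (x, i)
    rw [wreath_pow_apply] at hMper
    have hψM : (ψ ^ Function.minimalPeriod (⇑(wreath d ψ g)) (x, i)) i = i :=
      congrArg Prod.snd hMper
    obtain ⟨m, hm⟩ := Function.IsPeriodicPt.minimalPeriod_dvd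
      ((perm_isPeriodicPt_iff ψ _ i).mpr hψM)
    have hx1 : (wprod ψ g (p * m) i) x = x := by
      rw [← hm]; exact congrArg Prod.fst hMper
    rw [wprod_mul ψ g p m i hpi] at hx1
    have hqm : q ∣ m := Function.IsPeriodicPt.minimalPeriod_dvd
      ((perm_isPeriodicPt_iff Q m x).mpr hx1)
    rw [hm]
    exact Nat.mul_dvd_mul_left p hqm

/-- `w(ψ,g)` is a `(d·n)`-cycle on `Ω × {0,…,d−1}` (where `n = |Ω|`), i.e. some point has
orbit of size `d·n`, if and only if `ψ` is a `d`-cycle (some point has `ψ`-orbit of size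
`d`) and the forward cycle product `h = g_{ψ^d(0)} ∘ g_{ψ^{d−1}(0)} ∘ ⋯ ∘ g_{ψ(0)}` is an
`n`-cycle on `Ω` (some point has `h`-orbit of size `n`). -/
theorem stmt17 {Ω : Type*} [Fintype Ω] [Nonempty Ω] (d : ℕ) (hd : 0 < d)
    (ψ : Equiv.Perm (Fin d)) (g : Fin d → Equiv.Perm Ω)
    (h : Equiv.Perm Ω)
    (hh : h = ((List.range d).map (fun j => g ((ψ ^ (d - j)) ⟨0, hd⟩))).prod) :
    (∃ q : Ω × Fin d,
        Function.minimalPeriod (fun y => (wreath d ψ g) y) q = d * Fintype.card Ω)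
      ↔ ((∃ i : Fin d, Function.minimalPeriod (fun j => ψ j) i = d)
          ∧ (∃ x : Ω, Function.minimalPeriod (fun y => h y) x = Fintype.card Ω)) := by
  classical
  have hn : 0 < Fintype.card Ω := Fintype.card_pos
  have hhP : h = wprod ψ g d ⟨0, hd⟩ := hh
  constructor
  · rintro ⟨⟨x, i⟩, hM⟩
    have hM' : Function.minimalPeriod (⇑(wreath d ψ g)) (x, i) = d * Fintype.card Ω := hM
    rw [wreath_minimalPeriod] at hM'
    set p := Function.minimalPeriod (⇑ψ) i with hp
    set Q := wprod ψ g p i with hQdef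
    set q := Function.minimalPeriod (⇑Q) x with hq
    have hple : p ≤ d := by
      have := perm_minimalPeriod_le_card ψ i
      simpa using this
    have hqle : q ≤ Fintype.card Ω := perm_minimalPeriod_le_card Q x
    have hppos : 0 < p := perm_minimalPeriod_pos ψ i
    have hqpos : 0 < q := perm_minimalPeriod_pos Q x
    have hpd : p = d := by nlinarith
    have hqn : q = Fintype.card Ω := by nlinarith
    refine ⟨⟨i, hpd⟩, ?_⟩
    have hi' : Function.minimalPeriod (⇑ψ) i = Fintype.card (Fin d) := by
      rw [Fintype.card_fin]; exact hpd
    obtain ⟨t, ht⟩ := perm_exists_pow_apply ψ hi' ⟨0, hd⟩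
    have hψd : (ψ ^ d) i = i := by
      have h0 := perm_pow_minimalPeriod ψ i
      rw [hp.symm.trans hpd] at h0
      exact h0
    have hcomm : wprod ψ g d ⟨0, hd⟩ * wprod ψ g t i = wprod ψ g t i * wprod ψ g d i := by
      have e1 := wprod_add ψ g d t i
      have e2 := wprod_add ψ g t d i
      rw [hψd] at e2
      rw [ht] at e1
      rw [← e1, Nat.add_comm d t, e2]
    have hkey : wprod ψ g d ⟨0, hd⟩
        = wprod ψ g t i * wprod ψ g d i * (wprod ψ g t i)⁻¹ :=
      eq_mul_inv_of_mul_eq hcomm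
    refine ⟨(wprod ψ g t i) x, ?_⟩
    show Function.minimalPeriod (⇑h) ((wprod ψ g t i) x) = Fintype.card Ω
    rw [hhP, hkey, perm_minimalPeriod_conj]
    have hQd : wprod ψ g d i = Q := by rw [hQdef, hpd]
    rw [hQd, ← hq]
    exact hqn
  · rintro ⟨⟨i, hi⟩, ⟨x, hx⟩⟩
    have hi0 : Function.minimalPeriod (⇑ψ) i = d := hi
    have hi' : Function.minimalPeriod (⇑ψ) i = Fintype.card (Fin d) := by
      rw [Fintype.card_fin]; exact hi0
    obtain ⟨t, ht⟩ := perm_exists_pow_apply ψ hi' ⟨0, hd⟩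
    have he : Function.minimalPeriod (⇑ψ) (⟨0, hd⟩ : Fin d) = d := by
      rw [← ht, Equiv.Perm.coe_pow,
        Function.minimalPeriod_apply_iterate (perm_mem_periodicPts ψ i) t]
      exact hi0
    refine ⟨(x, ⟨0, hd⟩), ?_⟩
    show Function.minimalPeriod (⇑(wreath d ψ g)) (x, ⟨0, hd⟩) = d * Fintype.card Ω
    rw [wreath_minimalPeriod, he, ← hhP]
    have hx' : Function.minimalPeriod (⇑h) x = Fintype.card Ω := hx
    rw [hx']
end
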